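/- Let k ≥ 4 be an integer, K0 > 0, K1 = (2k+1)!!·K0, γ = k/3 − 1/2, p ∈ (2,3), B > 0, and C_g > 0. Let g : (0,∞) → ℝ satisfy g(y) ≥ −C_g·y^{−5} for all y > 0. For δ ∈ (0, K1/2) define f_δ^±(y,τ) = (K1 ± δ)·e^{3γτ}·φ_k(y) ± (B·K1²·e^{6γτ}·g(y) + e^{(p+1)γτ}·y^{−p}). Then there exists R ≥ 1, depending only on k, K0, C_g, B and p, such that for every δ ∈ (0, K1/2) and all (y,τ) with y ≥ R·e^{γτ} one has f_δ^−(y,τ) < f_{δ/2}^−(y,τ) < f_{δ/2}^+(y,τ) < f_δ^+(y,τ). -/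
import Mathlib


open Filter Set

/-- The eigenfunction `φ_k(y) = y^{-2} Σ_{n=0}^k (binom(k,n)/(2n+1)!!) y^{2n}`. -/
noncomputable def phik (k : ℕ) (y : ℝ) : ℝ :=
  y ^ (-2 : ℤ) * ∑ n ∈ Finset.range (k + 1),
    ((k.choose n : ℝ) / (Nat.doubleFactorial (2 * n + 1) : ℝ)) * y ^ (2 * n)

/-- The intermediate-region barriers with sign `ε = ±1`. -/
noncomputable def fbar (k : ℕ) (K1 γ B p : ℝ) (g : ℝ → ℝ) (δ ε y τ : ℝ) : ℝ :=
  (K1 + ε * δ) * Real.exp (3 * γ * τ) * phik k y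
    + ε * (B * K1 ^ 2 * Real.exp (6 * γ * τ) * g y
        + Real.exp ((p + 1) * γ * τ) * y ^ (-p))

lemma phik_pos (k : ℕ) (y : ℝ) (hy : 0 < y) : 0 < phik k y := by
  unfold phik
  apply mul_pos (zpow_pos hy _)
  apply Finset.sum_pos'
  · intro i _
    positivity
  · refine ⟨0, Finset.mem_range.mpr (Nat.succ_pos k), ?_⟩
    simp [Nat.doubleFactorial]

/-- Nesting of the intermediate barriers:
`f_δ^- < f_{δ/2}^- < f_{δ/2}^+ < f_δ^+` for `y ≥ R e^{γτ}`. -/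
theorem stmt_7
    (k : ℕ) (hk : 4 ≤ k) (K0 : ℝ) (hK0 : 0 < K0)
    (K1 : ℝ) (hK1 : K1 = (Nat.doubleFactorial (2 * k + 1) : ℝ) * K0)
    (γ : ℝ) (hγ : γ = (k : ℝ) / 3 - 1 / 2)
    (p : ℝ) (hp : p ∈ Set.Ioo (2:ℝ) 3)
    (B : ℝ) (hB : 0 < B)
    (Cg : ℝ) (hCg : 0 < Cg)
    (g : ℝ → ℝ) (hgbd : ∀ y > (0:ℝ), -(Cg * y ^ (-5 : ℤ)) ≤ g y) :
    ∃ R ≥ (1:ℝ), ∀ δ ∈ Set.Ioo (0:ℝ) (K1 / 2), ∀ τ y : ℝ, R * Real.exp (γ * τ) ≤ y →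
      fbar k K1 γ B p g δ (-1) y τ < fbar k K1 γ B p g (δ / 2) (-1) y τ ∧
      fbar k K1 γ B p g (δ / 2) (-1) y τ < fbar k K1 γ B p g (δ / 2) 1 y τ ∧
      fbar k K1 γ B p g (δ / 2) 1 y τ < fbar k K1 γ B p g δ 1 y τ := by
  obtain ⟨hp2, hp3⟩ := hp
  have hK1pos : 0 < K1 := by
    rw [hK1]
    have := Nat.doubleFactorial_pos (2 * k + 1)
    positivity
  set C : ℝ := B * K1 ^ 2 * Cg with hC
  have hCpos : 0 < C := by positivity
  refine ⟨1 + C, by linarith, ?_⟩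
  intro δ hδ τ y hy
  have hRe : 0 < (1 + C) * Real.exp (γ * τ) := by positivity
  have hy0 : 0 < y := lt_of_lt_of_le hRe hy
  have hP : 0 < phik k y := phik_pos k y hy0
  have hE3 : 0 < Real.exp (3 * γ * τ) := Real.exp_pos _
  have hq : (1:ℝ) ≤ 5 - p := by linarith
  -- step 1 : C * e^{(5-p)γτ} < y^{5-p}
  have hyq : C * Real.exp ((5 - p) * (γ * τ)) < y ^ (5 - p) := by
    have h1 : C * Real.exp ((5 - p) * (γ * τ))
        < (1 + C) * Real.exp ((5 - p) * (γ * τ)) := by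
      have := Real.exp_pos ((5 - p) * (γ * τ))
      nlinarith
    have h2 : (1 + C) ≤ (1 + C) ^ (5 - p) := by
      calc (1 + C) = (1 + C) ^ (1 : ℝ) := (Real.rpow_one _).symm
        _ ≤ (1 + C) ^ (5 - p) := Real.rpow_le_rpow_of_exponent_le (by linarith) hq
    have h3 : (1 + C) ^ (5 - p) * Real.exp ((5 - p) * (γ * τ))
        = ((1 + C) * Real.exp (γ * τ)) ^ (5 - p) := by
      rw [Real.mul_rpow (by positivity) (by positivity), ← Real.exp_mul, mul_comm (γ * τ)]
    have h4 : ((1 + C) * Real.exp (γ * τ)) ^ (5 - p) ≤ y ^ (5 - p) :=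
      Real.rpow_le_rpow (le_of_lt hRe) hy (by linarith)
    have h5 : (1 + C) * Real.exp ((5 - p) * (γ * τ))
        ≤ (1 + C) ^ (5 - p) * Real.exp ((5 - p) * (γ * τ)) := by
      have := Real.exp_pos ((5 - p) * (γ * τ))
      nlinarith
    linarith [h3 ▸ h5, h4]
  -- step 2 : key bound
  have hkey : C * Real.exp (6 * γ * τ) * y ^ (-(5:ℝ)) < Real.exp ((p + 1) * γ * τ) * y ^ (-p) := by
    have hsplit : y ^ (-(5:ℝ)) = y ^ (-p) * (y ^ (5 - p))⁻¹ := by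
      rw [← Real.rpow_neg hy0.le, ← Real.rpow_add hy0]; ring_nf
    rw [hsplit]
    have hypos : 0 < y ^ (5 - p) := Real.rpow_pos_of_pos hy0 _
    have hypp : 0 < y ^ (-p) := Real.rpow_pos_of_pos hy0 _
    rw [show C * Real.exp (6 * γ * τ) * (y ^ (-p) * (y ^ (5 - p))⁻¹)
        = C * Real.exp (6 * γ * τ) * y ^ (-p) / y ^ (5 - p) by ring,
      div_lt_iff₀ hypos]
    have h6 : C * Real.exp (6 * γ * τ) < Real.exp ((p + 1) * γ * τ) * y ^ (5 - p) := by
      calc C * Real.exp (6 * γ * τ)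
          = Real.exp ((p + 1) * γ * τ) * (C * Real.exp ((5 - p) * (γ * τ))) := by
            rw [show (6:ℝ) * γ * τ = (p + 1) * γ * τ + (5 - p) * (γ * τ) by ring,
              Real.exp_add]; ring
        _ < Real.exp ((p + 1) * γ * τ) * y ^ (5 - p) :=
            mul_lt_mul_of_pos_left hyq (Real.exp_pos _)
    have := mul_lt_mul_of_pos_right h6 hypp
    linarith
  -- step 3 : positivity of the correction term X
  have hg := hgbd y hy0
  have hz : y ^ (-5 : ℤ) = y ^ (-(5:ℝ)) := by
    rw [show (-(5:ℝ)) = ((-5 : ℤ) : ℝ) by norm_num, Real.rpow_intCast]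
  rw [hz] at hg
  have hX : 0 < B * K1 ^ 2 * Real.exp (6 * γ * τ) * g y
      + Real.exp ((p + 1) * γ * τ) * y ^ (-p) := by
    have hmul : B * K1 ^ 2 * Real.exp (6 * γ * τ) * (-(Cg * y ^ (-(5:ℝ))))
        ≤ B * K1 ^ 2 * Real.exp (6 * γ * τ) * g y :=
      mul_le_mul_of_nonneg_left hg (by positivity)
    rw [hC] at hkey
    linarith
  have hEP : 0 < Real.exp (3 * γ * τ) * phik k y := mul_pos hE3 hP
  obtain ⟨hδ0, hδK⟩ := hδ
  have hδEP : 0 < δ * (Real.exp (3 * γ * τ) * phik k y) := mul_pos hδ0 hEP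
  refine ⟨?_, ?_, ?_⟩ <;> simp only [fbar] <;> linarith [hδEP, hX]
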